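/- With c₁, c₂ > 0, A and B as above, the function z₊(x₁,x₂) = A + √(A²−B) attains its minimum over [0,2π)² at (π,π), and min z₊ = (c₁²+c₂²)/2 + |c₁²−c₂²|/2 = max(c₁², c₂²). -/

import Mathlib

open Real

noncomputable section

/-- `τ(x) = 1 + e^{ix}`. -/
def tau (x : ℝ) : ℂ := 1 + Complex.exp (x * Complex.I)

/-- `A = (c₁²+c₂²)/2 + |τ(x₁)|² + |τ(x₂)|²`. -/
def Aval (c₁ c₂ x₁ x₂ : ℝ) : ℝ :=
  (c₁ ^ 2 + c₂ ^ 2) / 2 + ‖tau x₁‖ ^ 2 + ‖tau x₂‖ ^ 2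

/-- `B = (|τ(x₂)|² − |τ(x₁)|² − c₁c₂)²`. -/
def Bval (c₁ c₂ x₁ x₂ : ℝ) : ℝ :=
  (‖tau x₂‖ ^ 2 - ‖tau x₁‖ ^ 2 - c₁ * c₂) ^ 2

/-- The upper root `z₊ = A + √(A²−B)`. -/
def zPlus (c₁ c₂ x₁ x₂ : ℝ) : ℝ :=
  Aval c₁ c₂ x₁ x₂ + Real.sqrt (Aval c₁ c₂ x₁ x₂ ^ 2 - Bval c₁ c₂ x₁ x₂)

lemma tau_pi : tau π = 0 := by
  simp [tau, Complex.exp_pi_mul_I]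

lemma abs_tau_nonneg (x : ℝ) : 0 ≤ ‖tau x‖ ^ 2 := sq_nonneg _

/-- `z₊` attains its minimum over the torus at `(π, π)`, where it equals
`(c₁²+c₂²)/2 + |c₁²−c₂²|/2 = max(c₁², c₂²)`. -/
theorem min_zPlus (c₁ c₂ : ℝ) (hc₁ : 0 < c₁) (hc₂ : 0 < c₂) :
    (∀ x₁ ∈ Set.Ico (0 : ℝ) (2 * π), ∀ x₂ ∈ Set.Ico (0 : ℝ) (2 * π),
        zPlus c₁ c₂ π π ≤ zPlus c₁ c₂ x₁ x₂) ∧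
    zPlus c₁ c₂ π π = (c₁ ^ 2 + c₂ ^ 2) / 2 + |c₁ ^ 2 - c₂ ^ 2| / 2 ∧
    zPlus c₁ c₂ π π = max (c₁ ^ 2) (c₂ ^ 2) := by
  have habs : |c₁ ^ 2 - c₂ ^ 2| / 2 = Real.sqrt ((c₁ + c₂) ^ 2 / 2 * ((c₁ - c₂) ^ 2 / 2)) := by
    rw [show (c₁ + c₂) ^ 2 / 2 * ((c₁ - c₂) ^ 2 / 2) = ((c₁ ^ 2 - c₂ ^ 2) / 2) ^ 2 by ring,
      Real.sqrt_sq_eq_abs, abs_div]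
    simp
  have hval : zPlus c₁ c₂ π π = (c₁ ^ 2 + c₂ ^ 2) / 2 + |c₁ ^ 2 - c₂ ^ 2| / 2 := by
    rw [zPlus, Aval, Bval, tau_pi]
    simp only [norm_zero]
    rw [habs]
    ring_nf
  refine ⟨?_, hval, ?_⟩
  · intro x₁ _ x₂ _
    set t₁ := ‖tau x₁‖ ^ 2 with ht₁
    set t₂ := ‖tau x₂‖ ^ 2 with ht₂
    have h₁ : 0 ≤ t₁ := abs_tau_nonneg x₁
    have h₂ : 0 ≤ t₂ := abs_tau_nonneg x₂
    rw [hval, zPlus, Aval, Bval]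
    have hfact : ((c₁ ^ 2 + c₂ ^ 2) / 2 + t₁ + t₂) ^ 2 - (t₂ - t₁ - c₁ * c₂) ^ 2 =
        ((c₁ + c₂) ^ 2 / 2 + 2 * t₁) * ((c₁ - c₂) ^ 2 / 2 + 2 * t₂) := by ring
    rw [← ht₁, ← ht₂, hfact]
    have hs : Real.sqrt ((c₁ + c₂) ^ 2 / 2 * ((c₁ - c₂) ^ 2 / 2)) ≤
        Real.sqrt (((c₁ + c₂) ^ 2 / 2 + 2 * t₁) * ((c₁ - c₂) ^ 2 / 2 + 2 * t₂)) := by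
      apply Real.sqrt_le_sqrt
      apply mul_le_mul (by linarith) (by linarith) (by positivity) (by positivity)
    rw [habs]
    linarith
  · rw [hval]
    rcases le_total c₁ c₂ with h | h
    · rw [max_eq_right (by nlinarith), abs_of_nonpos (by nlinarith)]; ring
    · rw [max_eq_left (by nlinarith), abs_of_nonneg (by nlinarith)]; ring

end
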